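/- Let $E_0 > 0$, $v > 0$, $W_0 \in \mathbb{C}$ with $W_0 \neq 0$, let $U \subseteq \mathbb{C}$ be an open neighborhood of $E_0$, and let $S$ be holomorphic on $U$, real-valued on $U \cap \mathbb{R}$, with $S'(E_0) = T > 0$. Then for every $M > 0$ and $r > 0$ there exist $C > 0$ and $h_0 > 0$ such that for all $h \in (0,h_0)$, every $E \in R_h(M)$ with $C_0(E;h) = 1$ satisfies $\left|\operatorname{Im} E + T^{-1} h \log(1/h)\right| \le C h$; that is, every pseudo-resonance in $R_h(M)$ has imaginary part $-T^{-1} h (\log(1/h) + \mathcal{O}(1))$. -/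

import Mathlib

/-- Auxiliary: extract `Im S(E)` from the modulus of the pseudo-resonance equation. -/
lemma aux_mod (vv h : ℝ) (hvv : 0 < vv) (hh : 0 < h) (W0 : ℂ) (hW0 : W0 ≠ 0) (w : ℂ)
    (heq : Complex.I * h * Real.pi * W0 * Complex.exp (Complex.I * w / h) / vv = 1) :
    w.im = -(h * Real.log (1 / h)) - h * Real.log (vv / (Real.pi * ‖W0‖)) := by
  have hd : (vv : ℂ) ≠ 0 := by exact_mod_cast hvv.ne'
  have h1 : Complex.I * h * Real.pi * W0 * Complex.exp (Complex.I * w / h) = (vv : ℂ) :=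
    (div_eq_one_iff_eq hd).mp heq
  have h2 := congrArg (‖·‖) h1
  have hre : (Complex.I * w / (h : ℂ)).re = -w.im / h := by
    rw [Complex.div_ofReal_re]
    simp [Complex.mul_re]
  rw [norm_mul, norm_mul, norm_mul, norm_mul, Complex.norm_I, Complex.norm_real, Complex.norm_real,
    Complex.norm_exp, hre, Complex.norm_real] at h2
  simp only [Real.norm_eq_abs] at h2
  rw [abs_of_pos hh, abs_of_pos Real.pi_pos,
    abs_of_pos hvv, one_mul] at h2
  have hW0' : 0 < ‖W0‖ := norm_pos_iff.mpr hW0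
  have h3 : Real.exp (-w.im / h) = vv / (h * (Real.pi * ‖W0‖)) := by
    field_simp at h2 ⊢
    linarith [h2]
  have h4 : -w.im / h = Real.log (vv / (Real.pi * ‖W0‖)) + Real.log (1 / h) := by
    have := congrArg Real.log h3
    rw [Real.log_exp] at this
    rw [this]
    rw [show vv / (h * (Real.pi * ‖W0‖))
        = vv / (Real.pi * ‖W0‖) * (1 / h) by
      rw [div_mul_div_comm, mul_one, mul_comm (Real.pi * ‖W0‖) h]]
    rw [Real.log_mul (by positivity) (by positivity)]
  have : -w.im = h * (Real.log (vv / (Real.pi * ‖W0‖)) + Real.log (1 / h)) := by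
    field_simp at h4
    linarith [h4]
  linarith [this]

set_option maxHeartbeats 1000000 in
theorem stmt_6 (E0 v : ℝ) (hE0 : 0 < E0) (hv : 0 < v)
    (W0 : ℂ) (hW0 : W0 ≠ 0) (U : Set ℂ) (hU : IsOpen U) (hE0U : (E0 : ℂ) ∈ U)
    (S : ℂ → ℂ) (hS : DifferentiableOn ℂ S U)
    (hreal : ∀ x : ℝ, (x : ℂ) ∈ U → (S x).im = 0)
    (T : ℝ) (hT : 0 < T) (hS' : HasDerivAt S (T : ℂ) (E0 : ℂ)) :
    ∀ M > 0, ∀ r > 0, ∃ C > 0, ∃ h0 > 0, ∀ h : ℝ, h ∈ Set.Ioo 0 h0 →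
      ∀ E : ℂ, |E.re - E0| ≤ r * h * Real.log (1 / h) →
        -(M * h * Real.log (1 / h)) ≤ E.im → E.im ≤ 0 →
        Complex.I * h * Real.pi * W0 * Complex.exp (Complex.I * S E / h) /
          (v * Real.sqrt E0) = 1 →
        |E.im + T⁻¹ * h * Real.log (1 / h)| ≤ C * h := by
  intro M hM r hr
  -- closed ball inside U
  obtain ⟨ε, hε, hsub⟩ := Metric.isOpen_iff.mp hU _ hE0U
  set δ := ε / 2 with hδdef
  have hδ : 0 < δ := by positivity
  have hball : Metric.closedBall (E0 : ℂ) δ ⊆ U := fun z hz => hsub (by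
    rw [Metric.mem_ball]
    have hz' := Metric.mem_closedBall.mp hz
    rw [hδdef] at hz'
    linarith)
  -- analyticity and second derivative bound
  have hA : AnalyticOnNhd ℂ S U := hS.analyticOnNhd hU
  have hA1 : AnalyticOnNhd ℂ (deriv S) U := hA.deriv
  have hA2 : AnalyticOnNhd ℂ (deriv (deriv S)) U := hA1.deriv
  obtain ⟨K, hK⟩ := (isCompact_closedBall (E0 : ℂ) δ).exists_bound_of_continuousOn
    (hA2.continuousOn.mono hball)
  have hK0 : 0 ≤ K :=
    le_trans (norm_nonneg _) (hK _ (Metric.mem_closedBall_self hδ.le))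
  -- Lipschitz bound for deriv S
  have hLip : ∀ z ∈ Metric.closedBall (E0 : ℂ) δ, ‖deriv S z - (T : ℂ)‖ ≤ K * ‖z - (E0 : ℂ)‖ := by
    intro z hz
    have hmvt := Convex.norm_image_sub_le_of_norm_hasDerivWithin_le
      (f := deriv S) (f' := deriv (deriv S)) (s := Metric.closedBall (E0 : ℂ) δ)
      (fun x hx => ((hA1 x (hball hx)).differentiableAt.hasDerivAt).hasDerivWithinAt)
      hK (convex_closedBall _ _) (Metric.mem_closedBall_self hδ.le) hz
    rwa [hS'.deriv] at hmvt
  -- constants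
  set c := Real.log (v * Real.sqrt E0 / (Real.pi * ‖W0‖)) with hc
  refine ⟨T⁻¹ * (|c| + K * (r + M) * M) + 1, by positivity,
    min ((δ / (4 * (r + M))) ^ ((4 : ℝ) / 3)) (1 / 256), by positivity, ?_⟩
  intro h ⟨hh0, hh1⟩ E hreE himlow himhi heq
  set L := Real.log (1 / h) with hLdef
  have hh256 : h ≤ 1 / 256 := le_of_lt (lt_of_lt_of_le hh1 (min_le_right _ _))
  have hh3 : h ≤ (δ / (4 * (r + M))) ^ ((4 : ℝ) / 3) :=
    le_of_lt (lt_of_lt_of_le hh1 (min_le_left _ _))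
  have hL0 : 0 ≤ L := Real.log_nonneg ((le_div_iff₀ hh0).mpr (by linarith))
  -- u = h^(1/4)
  set u := h ^ ((1 : ℝ) / 4) with hu
  have hu0 : 0 < u := Real.rpow_pos_of_pos hh0 _
  have hu4 : u ^ (4 : ℕ) = h := by
    rw [hu, ← Real.rpow_natCast (h ^ ((1:ℝ)/4)) 4, ← Real.rpow_mul hh0.le]
    norm_num
  -- L ≤ 4 / u
  have hLu : L ≤ 4 / u := by
    have := Real.log_le_rpow_div (le_of_lt (by positivity : (0:ℝ) < 1 / h))
      (by norm_num : (0:ℝ) < 1 / 4)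
    have e1 : ((1:ℝ)/h) ^ ((1:ℝ)/4) = u⁻¹ := by
      rw [show (1:ℝ)/h = h⁻¹ by ring, Real.inv_rpow hh0.le, hu]
    rw [hLdef]
    calc Real.log (1 / h) ≤ (1 / h) ^ ((1:ℝ)/4) / (1/4) := this
      _ = 4 / u := by rw [e1]; field_simp
  have hLu' : u * L ≤ 4 := by
    have := mul_le_mul_of_nonneg_left hLu hu0.le
    rwa [mul_div_cancel₀ _ hu0.ne'] at this
  -- u ≤ 1/4
  have hu14 : u ≤ 1 / 4 := by
    have : u ^ (4 : ℕ) ≤ (1 / 4 : ℝ) ^ (4 : ℕ) := by rw [hu4]; norm_num; linarith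
    exact le_of_pow_le_pow_left₀ (by norm_num) (by norm_num) this
  -- u^3 ≤ δ / (4 * (r + M))
  have hA4 : 0 < δ / (4 * (r + M)) := by positivity
  have hu3 : u ^ (3 : ℕ) ≤ δ / (4 * (r + M)) := by
    have h1 : u ≤ (δ / (4 * (r + M))) ^ ((1 : ℝ) / 3) := by
      have := Real.rpow_le_rpow hh0.le hh3 (by norm_num : (0:ℝ) ≤ 1 / 4)
      rwa [← Real.rpow_mul hA4.le, show (4:ℝ)/3 * (1/4) = 1/3 by norm_num] at this
    calc u ^ (3:ℕ) ≤ ((δ / (4 * (r + M))) ^ ((1:ℝ)/3)) ^ (3:ℕ) :=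
          pow_le_pow_left₀ hu0.le h1 3
      _ = δ / (4 * (r + M)) := by
          rw [← Real.rpow_natCast ((δ / (4 * (r + M))) ^ ((1:ℝ)/3)) 3,
            ← Real.rpow_mul hA4.le]
          norm_num
  -- key smallness facts
  have hhL : h * L ≤ 4 * u ^ (3:ℕ) := by
    calc h * L = u ^ (3:ℕ) * (u * L) := by rw [← hu4]; ring
      _ ≤ u ^ (3:ℕ) * 4 := by
          exact mul_le_mul_of_nonneg_left hLu' (by positivity)
      _ = 4 * u ^ (3:ℕ) := by ring
  have hρδ : (r + M) * (h * L) ≤ δ := by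
    calc (r + M) * (h * L) ≤ (r + M) * (4 * u ^ (3:ℕ)) :=
          mul_le_mul_of_nonneg_left hhL (by positivity)
      _ = 4 * (r + M) * u ^ (3:ℕ) := by ring
      _ ≤ 4 * (r + M) * (δ / (4 * (r + M))) :=
          mul_le_mul_of_nonneg_left hu3 (by positivity)
      _ = δ := by field_simp
  have hhL2 : h * L ^ 2 ≤ 1 := by
    have h1 : h * L ^ 2 = u ^ (2:ℕ) * (u * L) ^ 2 := by rw [← hu4]; ring
    calc h * L ^ 2 = u ^ (2:ℕ) * (u * L) ^ 2 := h1
      _ ≤ (1/4) ^ (2:ℕ) * 4 ^ 2 := by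
          apply mul_le_mul (pow_le_pow_left₀ hu0.le hu14 2)
            (pow_le_pow_left₀ (by positivity) hLu' 2) (by positivity) (by positivity)
      _ = 1 := by norm_num
  -- step 1: imaginary part of S E
  have hvs : (0:ℝ) < v * Real.sqrt E0 := by positivity
  have heq' : Complex.I * h * Real.pi * W0 * Complex.exp (Complex.I * S E / h) /
      ((v * Real.sqrt E0 : ℝ) : ℂ) = 1 := by
    rw [Complex.ofReal_mul]; exact heq
  have hSim : (S E).im = -(h * L) - h * c :=
    aux_mod (v * Real.sqrt E0) h hvs hh0 W0 hW0 (S E) heq'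
  -- set ρ
  set ρ := (r + M) * (h * L) with hρ
  have hρ0 : 0 ≤ ρ := by positivity
  -- E and Re E in the small ball
  have hEim : |E.im| ≤ M * (h * L) := by
    rw [abs_le]; constructor <;> [linarith [himlow]; nlinarith]
  have hEball : E ∈ Metric.closedBall (E0 : ℂ) ρ := by
    rw [Metric.mem_closedBall, dist_eq_norm]
    calc ‖E - (E0:ℂ)‖ ≤ |(E - (E0:ℂ)).re| + |(E - (E0:ℂ)).im| :=
          Complex.norm_le_abs_re_add_abs_im _
      _ = |E.re - E0| + |E.im| := by simp
      _ ≤ r * h * L + M * (h * L) := add_le_add hreE hEim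
      _ = ρ := by rw [hρ]; ring
  have hreEball : ((E.re : ℂ)) ∈ Metric.closedBall (E0 : ℂ) ρ := by
    rw [Metric.mem_closedBall, dist_eq_norm]
    calc ‖(E.re : ℂ) - (E0:ℂ)‖ = |E.re - E0| := by
          rw [← Complex.ofReal_sub, Complex.norm_real, Real.norm_eq_abs]
      _ ≤ r * h * L := hreE
      _ ≤ ρ := by rw [hρ]; nlinarith [mul_nonneg hh0.le hL0]
  have hsmall : Metric.closedBall (E0 : ℂ) ρ ⊆ Metric.closedBall (E0 : ℂ) δ :=
    Metric.closedBall_subset_closedBall hρδ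
  -- step 2: MVT for g z = S z - T z on the small ball
  have hmvt := Convex.norm_image_sub_le_of_norm_hasDerivWithin_le
    (f := fun z => S z - (T : ℂ) * z) (f' := fun z => deriv S z - (T : ℂ))
    (s := Metric.closedBall (E0 : ℂ) ρ) (C := K * ρ)
    (fun x hx => by
      have h1 : HasDerivAt S (deriv S x) x :=
        (hA x (hball (hsmall hx))).differentiableAt.hasDerivAt
      have h2 : HasDerivAt (fun z : ℂ => (T : ℂ) * z) ((T : ℂ) * 1) x :=
        (hasDerivAt_id x).const_mul _
      rw [mul_one] at h2
      exact (h1.sub h2).hasDerivWithinAt)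
    (fun x hx => by
      calc ‖deriv S x - (T:ℂ)‖ ≤ K * ‖x - (E0:ℂ)‖ := hLip x (hsmall hx)
        _ ≤ K * ρ := mul_le_mul_of_nonneg_left
            (by rw [← dist_eq_norm]; exact hx) hK0)
    (convex_closedBall _ _) hreEball hEball
  -- compute norm of E - Re E
  have hdiff : E - (E.re : ℂ) = (E.im : ℂ) * Complex.I := by
    apply Complex.ext <;> simp
  have hnorm : ‖E - (E.re : ℂ)‖ = |E.im| := by
    rw [hdiff, norm_mul, Complex.norm_real, Complex.norm_I, Real.norm_eq_abs, mul_one]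
  rw [hnorm] at hmvt
  -- imaginary part of the MVT inequality
  have hreU : ((E.re : ℂ)) ∈ U := hball (hsmall hreEball)
  have hSre : (S (E.re : ℂ)).im = 0 := hreal E.re hreU
  have himcalc : ((S E - (T:ℂ) * E) - (S (E.re:ℂ) - (T:ℂ) * (E.re:ℂ))).im
      = (S E).im - T * E.im := by
    simp [Complex.sub_im, Complex.mul_im, hSre]
  have hest : |(S E).im - T * E.im| ≤ K * ρ * |E.im| := by
    rw [← himcalc]
    exact le_trans (Complex.abs_im_le_norm _) hmvt
  -- combine
  have herr : K * ρ * |E.im| ≤ K * (r + M) * M * h := by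
    calc K * ρ * |E.im| ≤ K * ρ * (M * (h * L)) :=
          mul_le_mul_of_nonneg_left hEim (by positivity)
      _ = K * (r + M) * M * (h * L ^ 2) * h := by rw [hρ]; ring
      _ ≤ K * (r + M) * M * 1 * h := by
          apply mul_le_mul_of_nonneg_right _ hh0.le
          exact mul_le_mul_of_nonneg_left hhL2 (by positivity)
      _ = K * (r + M) * M * h := by ring
  have hfin : |T * E.im + h * L| ≤ (|c| + K * (r + M) * M) * h := by
    have h1 : T * E.im + h * L = -((S E).im - T * E.im) - h * c := by
      rw [hSim]; ring
    rw [h1]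
    calc |-((S E).im - T * E.im) - h * c|
        ≤ |(S E).im - T * E.im| + |h * c| := by
          rw [sub_eq_add_neg]
          exact le_trans (abs_add_le _ _) (by rw [abs_neg, abs_neg])
      _ ≤ K * (r + M) * M * h + h * |c| := by
          refine add_le_add (le_trans hest herr) ?_
          rw [abs_mul, abs_of_pos hh0]
      _ = (|c| + K * (r + M) * M) * h := by ring
  have hfinal : |E.im + T⁻¹ * h * L| ≤ T⁻¹ * (|c| + K * (r + M) * M) * h := by
    have h1 : E.im + T⁻¹ * h * L = T⁻¹ * (T * E.im + h * L) := by
      field_simp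
    rw [h1, abs_mul, abs_of_pos (inv_pos.mpr hT), mul_assoc]
    exact mul_le_mul_of_nonneg_left hfin (inv_pos.mpr hT).le
  calc |E.im + T⁻¹ * h * L| ≤ T⁻¹ * (|c| + K * (r + M) * M) * h := hfinal
    _ ≤ (T⁻¹ * (|c| + K * (r + M) * M) + 1) * h := by nlinarith
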